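/- If a formal context (G,M,I) admits an ordinal two-factorization, i.e., there exist Ferrers relations F1, F2 ⊆ G × M with F1 ∪ F2 = I, then the incompatibility graph of (G,M,I) is bipartite (2-colorable). In particular, two incompatible incidence pairs can never belong to the same Ferrers relation contained in I. -/

import Mathlib

set_option linter.unnecessarySimpa false

/-- A Ferrers relation: whenever `(g,m) ∈ F` and `(h,n) ∈ F`,
then `(g,n) ∈ F` or `(h,m) ∈ F`. -/
def IsFerrers {G M : Type*} (F : Set (G × M)) : Prop :=
  ∀ g h : G, ∀ m n : M, (g, m) ∈ F → (h, n) ∈ F → (g, n) ∈ F ∨ (h, m) ∈ F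

/-- Two pairs `p, q ∈ I` are incompatible if `(p.1, q.2) ∉ I` and `(q.1, p.2) ∉ I`. -/
def Incompatible {G M : Type*} (I : Set (G × M)) (p q : G × M) : Prop :=
  p ∈ I ∧ q ∈ I ∧ (p.1, q.2) ∉ I ∧ (q.1, p.2) ∉ I

/-- The incompatibility graph of a formal context `(G, M, I)`: vertices are the
elements of `I`, with an edge between each pair of incompatible elements. -/
def IncompGraph {G M : Type*} (I : Set (G × M)) : SimpleGraph I where
  Adj p q := Incompatible I p.1 q.1
  symm := ⟨fun _ _ h => ⟨h.2.1, h.1, h.2.2.2, h.2.2.1⟩⟩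
  loopless := ⟨fun p h => h.2.2.1 (by simpa using h.1)⟩

/-- If a formal context `(G, M, I)` admits an ordinal two-factorization, then its
incompatibility graph is bipartite (2-colorable); and two incompatible pairs can
never belong to the same Ferrers relation contained in `I`. -/
theorem ordinal_two_factorization_implies_bipartite {G M : Type*}
    (I F1 F2 : Set (G × M)) (hF1 : IsFerrers F1) (hF2 : IsFerrers F2)
    (hUnion : F1 ∪ F2 = I) :
    (IncompGraph I).Colorable 2 ∧
      ∀ F : Set (G × M), IsFerrers F → F ⊆ I →
        ∀ p q : G × M, Incompatible I p q → ¬(p ∈ F ∧ q ∈ F) := by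

  classical
  have key : ∀ F : Set (G × M), IsFerrers F → F ⊆ I →
      ∀ p q : G × M, Incompatible I p q → ¬(p ∈ F ∧ q ∈ F) := by
    intro F hF hFI p q hpq ⟨hp, hq⟩
    rcases hF p.1 q.1 p.2 q.2 (by simpa using hp) (by simpa using hq) with h | h
    · exact hpq.2.2.1 (hFI h)
    · exact hpq.2.2.2 (hFI h)
  refine ⟨?_, key⟩
  refine ⟨fun p => if (p : G × M) ∈ F1 then 0 else 1, ?_⟩
  intro p q hadj
  have hsub1 : F1 ⊆ I := hUnion ▸ Set.subset_union_left
  have hsub2 : F2 ⊆ I := hUnion ▸ Set.subset_union_right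
  have hmem : ∀ r : ↑I, (r : G × M) ∉ F1 → (r : G × M) ∈ F2 := by
    intro r hr
    have : (r : G × M) ∈ F1 ∪ F2 := hUnion ▸ r.2
    exact this.resolve_left hr
  by_cases h1 : (p : G × M) ∈ F1 <;> by_cases h2 : (q : G × M) ∈ F1 <;>
    simp only [h1, h2, if_true, if_false, ne_eq]
  · exact absurd ⟨h1, h2⟩ (key F1 hF1 hsub1 p q hadj)
  · decide
  · decide
  · exact absurd ⟨hmem p h1, hmem q h2⟩ (key F2 hF2 hsub2 p q hadj)
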